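/- arXiv:1211.3847 — 6 statements merged into one kernel-verified Lean document; each statement's English description precedes it below -/
import Mathlib

section
/- Let F be a POVM on a measurable space X with values in a complex Hilbert space H. Then F is uniformly continuous if and only if for every decreasing sequence of measurable sets Δ_i with ⋂_i Δ_i = ∅, one has ‖F(Δ_i)‖ → 0 as i → ∞. -/
open MeasureTheory Filter Topology

/-- A positive-operator-valued measure on a measurable space `X`, with values in the
bounded operators on a complex Hilbert space `H`: each `F Δ` (for measurable `Δ`) is a
positive operator with `F Δ ≤ 1`, and `F` is countably additive in the weak operator
topology on pairwise disjoint measurable sets. -/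
structure POVM (X : Type*) [MeasurableSpace X] (H : Type*)
    [NormedAddCommGroup H] [InnerProductSpace ℂ H] [CompleteSpace H] where
  toFun : Set X → H →L[ℂ] H
  isPositive : ∀ Δ : Set X, MeasurableSet Δ → (toFun Δ).IsPositive
  le_one : ∀ Δ : Set X, MeasurableSet Δ → (1 - toFun Δ).IsPositive
  weak_additive : ∀ Δ : ℕ → Set X, (∀ n, MeasurableSet (Δ n)) →
    Pairwise (Function.onFun Disjoint Δ) → ∀ φ ψ : H,
      Tendsto (fun n => ∑ i ∈ Finset.range n, (inner ℂ φ (toFun (Δ i) ψ) : ℂ))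
        atTop (𝓝 (inner ℂ φ (toFun (⋃ n, Δ n) ψ) : ℂ))

/-- A POVM is uniformly continuous if on every pairwise disjoint sequence of measurable
sets the partial sums of the values converge to the value on the union in operator norm. -/
def POVM.UniformlyContinuous {X : Type*} [MeasurableSpace X] {H : Type*}
    [NormedAddCommGroup H] [InnerProductSpace ℂ H] [CompleteSpace H]
    (F : POVM X H) : Prop :=
  ∀ Δ : ℕ → Set X, (∀ n, MeasurableSet (Δ n)) → Pairwise (Function.onFun Disjoint Δ) →
    Tendsto (fun n => ∑ i ∈ Finset.range n, F.toFun (Δ i)) atTop (𝓝 (F.toFun (⋃ n, Δ n)))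

namespace POVM
variable {X : Type*} [MeasurableSpace X] {H : Type*}
    [NormedAddCommGroup H] [InnerProductSpace ℂ H] [CompleteSpace H] (F : POVM X H)

lemma toFun_empty : F.toFun ∅ = 0 := by
  have key : ∀ φ ψ : H, (inner ℂ φ (F.toFun ∅ ψ) : ℂ) = 0 := by
    intro φ ψ
    have h := F.weak_additive (fun _ => ∅) (fun _ => MeasurableSet.empty)
      (fun i j _ => disjoint_bot_left) φ ψ
    simp only [Set.iUnion_empty] at h
    set c : ℂ := inner ℂ φ (F.toFun ∅ ψ) with hc
    have h2 : Tendsto (fun n : ℕ =>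
        (∑ i ∈ Finset.range (n + 1), c) - ∑ i ∈ Finset.range n, c) atTop (𝓝 (c - c)) :=
      (h.comp (tendsto_add_atTop_nat 1)).sub h
    have h3 : ∀ n : ℕ, (∑ i ∈ Finset.range (n + 1), c) - (∑ i ∈ Finset.range n, c) = c := by
      intro n; rw [Finset.sum_range_succ]; ring
    rw [show c - c = 0 by ring] at h2
    have h4 : Tendsto (fun _ : ℕ => c) atTop (𝓝 (0 : ℂ)) := by
      refine h2.congr h3
    exact tendsto_nhds_unique tendsto_const_nhds h4
  ext ψ
  have := key (F.toFun ∅ ψ) ψ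
  rwa [inner_self_eq_zero (𝕜 := ℂ)] at this

lemma toFun_union {A B : Set X} (hA : MeasurableSet A) (hB : MeasurableSet B)
    (hAB : Disjoint A B) : F.toFun (A ∪ B) = F.toFun A + F.toFun B := by
  ext ψ
  apply ext_inner_left ℂ
  intro φ
  classical
  set Δ : ℕ → Set X := fun n => if n = 0 then A else if n = 1 then B else ∅ with hΔ
  have hm : ∀ n, MeasurableSet (Δ n) := by
    intro n
    simp only [hΔ]
    split
    · exact hA
    · split
      · exact hB
      · exact MeasurableSet.empty
  have hd : Pairwise (Function.onFun Disjoint Δ) := by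
    intro i j hij
    unfold Function.onFun
    rcases i with _ | _ | i <;> rcases j with _ | _ | j <;>
      simp only [hΔ] <;> norm_num <;>
      first
        | exact (hij rfl).elim
        | exact hAB
        | exact hAB.symm
        | simp
  have hU : (⋃ n, Δ n) = A ∪ B := by
    apply Set.Subset.antisymm
    · refine Set.iUnion_subset fun n => ?_
      simp only [hΔ]
      split
      · exact Set.subset_union_left
      · split
        · exact Set.subset_union_right
        · exact Set.empty_subset _
    · rintro x (hx | hx)
      · exact Set.mem_iUnion.2 ⟨0, by simpa [hΔ] using hx⟩
      · exact Set.mem_iUnion.2 ⟨1, by simpa [hΔ] using hx⟩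
  have h := F.weak_additive Δ hm hd φ ψ
  rw [hU] at h
  have hconst : ∀ n, 2 ≤ n →
      (∑ i ∈ Finset.range n, (inner ℂ φ (F.toFun (Δ i) ψ) : ℂ))
        = inner ℂ φ (F.toFun A ψ) + inner ℂ φ (F.toFun B ψ) := by
    intro n hn
    rw [← Finset.sum_subset (Finset.range_subset_range.2 hn)]
    · simp [hΔ, Finset.sum_range_succ]
    · intro i _ hi
      simp only [Finset.mem_range, not_lt] at hi
      have h1 : i ≠ 0 := by omega
      have h2 : i ≠ 1 := by omega
      simp [hΔ, h1, h2, F.toFun_empty]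
  have h2 : Tendsto (fun n => ∑ i ∈ Finset.range n, (inner ℂ φ (F.toFun (Δ i) ψ) : ℂ))
      atTop (𝓝 (inner ℂ φ (F.toFun A ψ) + inner ℂ φ (F.toFun B ψ))) := by
    refine Tendsto.congr' ?_ tendsto_const_nhds
    filter_upwards [eventually_ge_atTop 2] with n hn
    exact (hconst n hn).symm
  have := tendsto_nhds_unique h h2
  simp [this, inner_add_right]

lemma toFun_biUnion (Δ : ℕ → Set X) (hm : ∀ n, MeasurableSet (Δ n))
    (hd : Pairwise (Function.onFun Disjoint Δ)) (n : ℕ) :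
    F.toFun (⋃ i ∈ Finset.range n, Δ i) = ∑ i ∈ Finset.range n, F.toFun (Δ i) := by
  induction n with
  | zero => simp [F.toFun_empty]
  | succ n ih =>
    have hU : (⋃ i ∈ Finset.range (n + 1), Δ i) = (⋃ i ∈ Finset.range n, Δ i) ∪ Δ n := by
      rw [Finset.range_add_one]
      simp [Set.biUnion_insert, Set.union_comm]
    rw [Finset.sum_range_succ, ← ih, hU,
      F.toFun_union (Finset.measurableSet_biUnion _ fun i _ => hm i) (hm n) ?_]
    rw [Set.disjoint_iUnion_left]
    intro i
    rw [Set.disjoint_iUnion_left]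
    intro hi
    exact hd (Finset.mem_range.1 hi).ne

end POVM

/-- A POVM is uniformly continuous iff for every decreasing sequence of measurable sets
`Δi` with empty intersection, `‖F (Δi i)‖ → 0`. -/
theorem uniformlyContinuous_iff_tendsto_on_decreasing
    {X : Type*} [MeasurableSpace X] {H : Type*}
    [NormedAddCommGroup H] [InnerProductSpace ℂ H] [CompleteSpace H]
    (F : POVM X H) :
    F.UniformlyContinuous ↔
      ∀ Δi : ℕ → Set X, (∀ i, MeasurableSet (Δi i)) → Antitone Δi →
        (⋂ i, Δi i) = ∅ →
        Tendsto (fun i => ‖F.toFun (Δi i)‖) atTop (𝓝 0) := by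
  constructor
  · -- Forward direction
    intro h Δi hm hanti hempty
    set E : ℕ → Set X := fun n => Δi n \ Δi (n + 1) with hE
    have hmE : ∀ n, MeasurableSet (E n) := fun n => (hm n).diff (hm (n + 1))
    have hsub : ∀ {i j : ℕ}, i < j → E j ⊆ Δi (i + 1) := fun {i j} hij =>
      Set.diff_subset.trans (hanti hij)
    have hdE : Pairwise (Function.onFun Disjoint E) := by
      intro i j hij
      rcases hij.lt_or_gt with h' | h'
      · exact Set.disjoint_left.2 fun x hxi hxj => hxi.2 (hsub h' hxj)
      · exact (Set.disjoint_left.2 fun x hxj hxi => hxj.2 (hsub h' hxi)).symm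
    have hUE : (⋃ n, E n) = Δi 0 := by
      apply Set.Subset.antisymm
      · exact Set.iUnion_subset fun n => Set.diff_subset.trans (hanti (Nat.zero_le n))
      · intro x hx0
        have hxk : ∃ k, x ∉ Δi k := by
          by_contra h'
          push_neg at h'
          have : x ∈ ⋂ i, Δi i := Set.mem_iInter.2 h'
          rw [hempty] at this
          exact this
        obtain ⟨k, hk⟩ := hxk
        have step : ∀ k, x ∉ Δi k → ∃ m, x ∈ Δi m ∧ x ∉ Δi (m + 1) := by
          intro k
          induction k with
          | zero => intro hk'; exact (hk' hx0).elim
          | succ k ih =>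
            intro hk'
            by_cases h' : x ∈ Δi k
            · exact ⟨k, h', hk'⟩
            · exact ih h'
        obtain ⟨m, hm1, hm2⟩ := step k hk
        exact Set.mem_iUnion.2 ⟨m, hm1, hm2⟩
    have hset : ∀ n, (⋃ i ∈ Finset.range n, E i) = Δi 0 \ Δi n := by
      intro n
      induction n with
      | zero => simp
      | succ n ih =>
        rw [Finset.range_add_one]
        rw [Finset.set_biUnion_insert, ih, Set.union_comm]
        exact Set.diff_union_diff_cancel (hanti (Nat.zero_le n)) (hanti n.le_succ)
    have hkey : ∀ n, F.toFun (Δi n)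
        = F.toFun (Δi 0) - ∑ i ∈ Finset.range n, F.toFun (E i) := by
      intro n
      have h1 := F.toFun_union (hm n) ((hm 0).diff (hm n)) disjoint_sdiff_self_right
      rw [Set.union_diff_cancel (hanti (Nat.zero_le n))] at h1
      rw [← hset n, F.toFun_biUnion E hmE hdE n] at h1
      rw [h1]
      abel
    have h1 := h E hmE hdE
    rw [hUE] at h1
    have h2 : Tendsto (fun n => F.toFun (Δi n)) atTop (𝓝 0) := by
      have h3 : Tendsto (fun n => F.toFun (Δi 0) - ∑ i ∈ Finset.range n, F.toFun (E i))
          atTop (𝓝 (F.toFun (Δi 0) - F.toFun (Δi 0))) := tendsto_const_nhds.sub h1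
      rw [sub_self] at h3
      exact h3.congr fun n => (hkey n).symm
    have := h2.norm
    rwa [norm_zero] at this
  · -- Backward direction
    intro h Δ hm hd
    set R : ℕ → Set X := fun n => ⋃ i, Δ (i + n) with hR
    have hmR : ∀ n, MeasurableSet (R n) := fun n => MeasurableSet.iUnion fun i => hm _
    have hantiR : Antitone R := by
      intro m n hmn x hx
      obtain ⟨i, hi⟩ := Set.mem_iUnion.1 hx
      refine Set.mem_iUnion.2 ⟨i + n - m, ?_⟩
      have heq : i + n - m + m = i + n := by omega
      rw [heq]
      exact hi
    have hemptyR : (⋂ n, R n) = ∅ := by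
      ext x
      simp only [Set.mem_iInter, Set.mem_empty_iff_false, iff_false]
      intro hx
      obtain ⟨i, hi⟩ := Set.mem_iUnion.1 (hx 0)
      obtain ⟨j, hj⟩ := Set.mem_iUnion.1 (hx (i + 1))
      exact Set.disjoint_left.1 (hd (show i + 0 ≠ j + (i + 1) by omega)) hi hj
    have hnorm := h R hmR hantiR hemptyR
    have hkey : ∀ n, F.toFun (⋃ k, Δ k)
        = (∑ i ∈ Finset.range n, F.toFun (Δ i)) + F.toFun (R n) := by
      intro n
      have hsplit : (⋃ k, Δ k) = (⋃ i ∈ Finset.range n, Δ i) ∪ R n := by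
        apply Set.Subset.antisymm
        · refine Set.iUnion_subset fun k => ?_
          rcases lt_or_ge k n with hk | hk
          · exact (Set.subset_biUnion_of_mem (Finset.mem_range.2 hk)).trans
              Set.subset_union_left
          · refine Set.Subset.trans ?_ Set.subset_union_right
            intro x hx
            exact Set.mem_iUnion.2 ⟨k - n, by rwa [Nat.sub_add_cancel hk]⟩
        · apply Set.union_subset
          · exact Set.iUnion₂_subset fun i _ => Set.subset_iUnion Δ i
          · exact Set.iUnion_subset fun i => Set.subset_iUnion Δ (i + n)
      have hdisj : Disjoint (⋃ i ∈ Finset.range n, Δ i) (R n) := by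
        rw [Set.disjoint_iUnion_left]
        intro i
        rw [Set.disjoint_iUnion_left]
        intro hi
        rw [hR, Set.disjoint_iUnion_right]
        intro j
        exact hd (show i ≠ j + n by have := Finset.mem_range.1 hi; omega)
      rw [hsplit, F.toFun_union (Finset.measurableSet_biUnion _ fun i _ => hm i) (hmR n) hdisj,
        F.toFun_biUnion Δ hm hd n]
    rw [tendsto_iff_norm_sub_tendsto_zero]
    refine hnorm.congr fun n => ?_
    rw [norm_sub_rev, hkey n, add_sub_cancel_left]
end

section
/- Let X be a metrizable second-countable topological space, H a complex Hilbert space, and F a POVM on the Borel sets of X with values in H that is uniformly continuous. If F has the norm-1 property, then for every point x in the spectrum σ(F) one has F({x}) ≠ 0 (equivalently ‖F({x})‖ ≠ 0). -/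
open MeasureTheory Filter Topology

/-- The norm-1 property of a POVM: every measurable set with nonzero value has value of
operator norm one. -/
def POVM.Norm1Property {X : Type*} [MeasurableSpace X] {H : Type*}
    [NormedAddCommGroup H] [InnerProductSpace ℂ H] [CompleteSpace H]
    (F : POVM X H) : Prop :=
  ∀ Δ : Set X, MeasurableSet Δ → F.toFun Δ ≠ 0 → ‖F.toFun Δ‖ = 1

/-- The spectrum of a POVM on a topological space: the points all of whose open
neighbourhoods have nonzero value. -/
def POVM.spectrum {X : Type*} [TopologicalSpace X] [MeasurableSpace X] {H : Type*}
    [NormedAddCommGroup H] [InnerProductSpace ℂ H] [CompleteSpace H]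
    (F : POVM X H) : Set X :=
  {x | ∀ Δ : Set X, IsOpen Δ → x ∈ Δ → F.toFun Δ ≠ 0}

section Aux

variable {X : Type*} [MeasurableSpace X] {H : Type*}
  [NormedAddCommGroup H] [InnerProductSpace ℂ H] [CompleteSpace H]

lemma POVM.empty_eq_zero (F : POVM X H) : F.toFun ∅ = 0 := by
  ext ψ
  refine ext_inner_left ℂ fun φ => ?_
  have h := F.weak_additive (fun _ => ∅) (fun _ => MeasurableSet.empty)
    (fun i j hij => by simp [Function.onFun]) φ ψ
  rw [Set.iUnion_empty] at h
  set c : ℂ := inner ℂ φ (F.toFun ∅ ψ) with hc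
  have h1 : Tendsto (fun n : ℕ => (n : ℕ) • c) atTop (𝓝 c) :=
    h.congr (fun n => by simp)
  have h2 : Tendsto (fun n : ℕ => (n + 1 : ℕ) • c) atTop (𝓝 c) :=
    h1.comp (tendsto_add_atTop_nat 1)
  have h3 : Tendsto (fun n : ℕ => (n + 1 : ℕ) • c - n • c) atTop (𝓝 (c - c)) :=
    h2.sub h1
  have h4 : Tendsto (fun _ : ℕ => c) atTop (𝓝 (c - c)) :=
    h3.congr (fun n => by rw [succ_nsmul]; ring)
  have hc0 : c = c - c := tendsto_nhds_unique tendsto_const_nhds h4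
  have : c = 0 := by linear_combination hc0
  simp [← hc, this]

lemma POVM.union_eq (F : POVM X H) {A B : Set X} (hA : MeasurableSet A)
    (hB : MeasurableSet B) (hd : Disjoint A B) :
    F.toFun (A ∪ B) = F.toFun A + F.toFun B := by
  ext ψ
  refine ext_inner_left ℂ fun φ => ?_
  set Δ : ℕ → Set X := fun n => if n = 0 then A else if n = 1 then B else ∅ with hΔ
  have hΔ0 : Δ 0 = A := rfl
  have hΔ1 : Δ 1 = B := rfl
  have hΔm : ∀ n, MeasurableSet (Δ n) := by
    intro n
    rcases n with _ | _ | n <;> simpa [hΔ] using by first | exact hA | exact hB |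
      exact MeasurableSet.empty
  have hΔe : ∀ n, Δ (n + 2) = ∅ := fun n => rfl
  have hΔd : Pairwise (Function.onFun Disjoint Δ) := by
    intro i j hij
    unfold Function.onFun
    rcases i with _ | _ | i <;> rcases j with _ | _ | j <;>
      simp_all [hΔ0, hΔ1, hΔe, hd, hd.symm]
  have hU : ⋃ n, Δ n = A ∪ B := by
    apply le_antisymm
    · refine Set.iUnion_subset fun n => ?_
      rcases n with _ | _ | n
      · exact Set.subset_union_left
      · exact Set.subset_union_right
      · simp [hΔ]
    · exact Set.union_subset (hΔ0 ▸ Set.subset_iUnion Δ 0) (hΔ1 ▸ Set.subset_iUnion Δ 1)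
  have h := F.weak_additive Δ hΔm hΔd φ ψ
  rw [hU] at h
  have hev : ∀ n, 2 ≤ n → ∑ i ∈ Finset.range n, (inner ℂ φ (F.toFun (Δ i) ψ) : ℂ)
      = inner ℂ φ (F.toFun A ψ) + inner ℂ φ (F.toFun B ψ) := by
    intro n hn
    rw [← Finset.sum_subset (Finset.range_subset_range.mpr hn)]
    · simp [Finset.sum_range_succ, hΔ0, hΔ1]
    · intro i _ hi
      simp only [Finset.mem_range, not_lt] at hi
      have : Δ i = ∅ := by
        rcases i with _ | _ | i
        · omega
        · omega
        · simp [hΔ]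
      simp [this, F.empty_eq_zero]
  have h2 : Tendsto (fun n => ∑ i ∈ Finset.range n, (inner ℂ φ (F.toFun (Δ i) ψ) : ℂ))
      atTop (𝓝 ((inner ℂ φ (F.toFun A ψ) : ℂ) + inner ℂ φ (F.toFun B ψ))) := by
    refine Tendsto.congr' ?_ tendsto_const_nhds
    filter_upwards [eventually_ge_atTop 2] with n hn
    exact (hev n hn).symm
  have := tendsto_nhds_unique h h2
  simpa [inner_add_right] using this

lemma POVM.sum_range (F : POVM X H) (D : ℕ → Set X) (hm : ∀ n, MeasurableSet (D n))
    (hd : Pairwise (Function.onFun Disjoint D)) (m : ℕ) :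
    ∑ i ∈ Finset.range m, F.toFun (D i) = F.toFun (⋃ i ∈ Finset.range m, D i) := by
  induction m with
  | zero => simp [F.empty_eq_zero]
  | succ m ih =>
    have hmeas : MeasurableSet (⋃ i ∈ Finset.range m, D i) :=
      (Finset.range m).measurableSet_biUnion (fun i _ => hm i)
    have hdisj : Disjoint (⋃ i ∈ Finset.range m, D i) (D m) := by
      rw [Set.disjoint_left]
      rintro a ha ha'
      simp only [Set.mem_iUnion, Finset.mem_range] at ha
      obtain ⟨i, hi, hai⟩ := ha
      exact (Set.disjoint_left.mp (hd (show i ≠ m by omega))) hai ha'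
    rw [Finset.sum_range_succ, ih,
      ← F.union_eq hmeas (hm m) hdisj]
    congr 1
    rw [Finset.range_add_one]
    simp [Set.biUnion_insert, Set.union_comm]

end Aux

/-- Necessary condition for the norm-1 property: if a uniformly continuous POVM on a
metrizable second-countable space has the norm-1 property, then it is nonzero on every
singleton of a point of its spectrum. -/
theorem norm1Property_imp_singleton_ne_zero
    {X : Type*} [TopologicalSpace X] [TopologicalSpace.MetrizableSpace X]
    [SecondCountableTopology X] [MeasurableSpace X] [BorelSpace X]
    {H : Type*} [NormedAddCommGroup H] [InnerProductSpace ℂ H] [CompleteSpace H]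
    (F : POVM X H) (hunif : F.UniformlyContinuous) (hnorm1 : F.Norm1Property) :
    ∀ x ∈ F.spectrum, F.toFun {x} ≠ 0 := by
  intro x hx hFx
  letI : MetricSpace X := TopologicalSpace.metrizableSpaceMetric X
  set U : ℕ → Set X := fun n => Metric.ball x (1 / (n + 1)) with hU
  have hUopen : ∀ n, IsOpen (U n) := fun n => Metric.isOpen_ball
  have hUmem : ∀ n, x ∈ U n := fun n => Metric.mem_ball_self (by positivity)
  have hUmeas : ∀ n, MeasurableSet (U n) := fun n => (hUopen n).measurableSet
  have hUanti : Antitone U := by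
    intro m n hmn
    apply Metric.ball_subset_ball
    apply one_div_le_one_div_of_le (by positivity)
    exact_mod_cast Nat.succ_le_succ hmn
  set D : ℕ → Set X := fun n => U n \ U (n + 1) with hD
  have hDmeas : ∀ n, MeasurableSet (D n) := fun n => (hUmeas n).diff (hUmeas (n + 1))
  have key : ∀ i j, i < j → Disjoint (D i) (D j) := by
    intro i j hij
    rw [Set.disjoint_left]
    intro a ha ha'
    exact ha.2 (hUanti (Nat.succ_le_of_lt hij) ha'.1)
  have hDdisj : Pairwise (Function.onFun Disjoint D) := fun i j hij =>
    hij.lt_or_gt.elim (key i j) (fun h => (key j i h).symm)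
  have hxmeas : MeasurableSet ({x} : Set X) := measurableSet_singleton x
  have hDunion : ⋃ n, D n = U 0 \ {x} := by
    ext y
    simp only [Set.mem_iUnion, Set.mem_diff, Set.mem_singleton_iff]
    constructor
    · rintro ⟨n, hy1, hy2⟩
      refine ⟨hUanti (Nat.zero_le n) hy1, fun h => hy2 (h ▸ hUmem (n + 1))⟩
    · rintro ⟨hy0, hyx⟩
      have hdist : 0 < dist y x := dist_pos.mpr hyx
      obtain ⟨n, hn⟩ := exists_nat_one_div_lt hdist
      have hP : ∃ k, y ∉ U k := ⟨n, fun h => absurd (Metric.mem_ball.mp h)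
        (by push_cast; push_cast at hn; linarith)⟩
      classical
      have hm0 : Nat.find hP ≠ 0 := by
        intro h
        exact (h ▸ Nat.find_spec hP) hy0
      obtain ⟨m', hm'⟩ := Nat.exists_eq_succ_of_ne_zero hm0
      refine ⟨m', ?_, by have := Nat.find_spec hP; rw [hm'] at this; exact this⟩
      by_contra h
      exact Nat.find_min hP (by omega) h
  have hDfin : ∀ m, ⋃ i ∈ Finset.range m, D i = U 0 \ U m := by
    intro m
    induction m with
    | zero => simp
    | succ m ih =>
      rw [Finset.range_add_one]
      rw [Finset.set_biUnion_insert, ih, Set.union_comm]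
      exact Set.diff_union_diff_cancel (hUanti (Nat.zero_le m))
        (hUanti (Nat.le_succ m))
  have hconv := hunif D hDmeas hDdisj
  rw [hDunion] at hconv
  have hkey : ∀ m, F.toFun (U m) =
      F.toFun (U 0 \ {x}) - ∑ i ∈ Finset.range m, F.toFun (D i) := by
    intro m
    have hsub1 : ({x} : Set X) ⊆ U m := Set.singleton_subset_iff.mpr (hUmem m)
    have hsplit : U 0 \ {x} = (U 0 \ U m) ∪ (U m \ {x}) :=
      (Set.diff_union_diff_cancel (hUanti (Nat.zero_le m)) hsub1).symm
    have hdisj1 : Disjoint (U 0 \ U m) (U m \ {x}) := by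
      rw [Set.disjoint_left]
      rintro a ha ha'
      exact ha.2 ha'.1
    have h1 : F.toFun (U 0 \ {x}) = F.toFun (U 0 \ U m) + F.toFun (U m \ {x}) := by
      rw [hsplit]
      exact F.union_eq ((hUmeas 0).diff (hUmeas m)) ((hUmeas m).diff hxmeas) hdisj1
    have h2 : F.toFun (U m) = F.toFun (U m \ {x}) := by
      have hsplit2 : U m = (U m \ {x}) ∪ {x} := (Set.diff_union_of_subset hsub1).symm
      have hdisj2 : Disjoint (U m \ {x}) ({x} : Set X) := Set.disjoint_sdiff_left
      conv_lhs => rw [hsplit2]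
      rw [F.union_eq ((hUmeas m).diff hxmeas) hxmeas hdisj2, hFx, add_zero]
    rw [F.sum_range D hDmeas hDdisj m, hDfin m, h1, h2]
    abel
  have htend : Tendsto (fun m => F.toFun (U m)) atTop (𝓝 0) := by
    have h5 : Tendsto (fun m : ℕ => F.toFun (U 0 \ {x}) - ∑ i ∈ Finset.range m, F.toFun (D i))
        atTop (𝓝 (F.toFun (U 0 \ {x}) - F.toFun (U 0 \ {x}))) :=
      tendsto_const_nhds.sub hconv
    rw [sub_self] at h5
    exact h5.congr (fun m => (hkey m).symm)
  have hnorm : Tendsto (fun m => ‖F.toFun (U m)‖) atTop (𝓝 0) := by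
    simpa using htend.norm
  have hone : ∀ m, ‖F.toFun (U m)‖ = 1 := fun m =>
    hnorm1 (U m) (hUmeas m) (hx (U m) (hUopen m) (hUmem m))
  have : Tendsto (fun _ : ℕ => (1 : ℝ)) atTop (𝓝 0) := hnorm.congr (fun m => hone m)
  exact one_ne_zero (tendsto_nhds_unique tendsto_const_nhds this)
end

section
/- Let X be a metrizable second-countable topological space, ν a Borel measure on X, and F a POVM on the Borel sets of X with values in a complex Hilbert space H that is absolutely continuous with respect to ν. If F has the norm-1 property, then for every point x in the spectrum σ(F) that possesses an open neighborhood of finite ν-measure, one has F({x}) ≠ 0. -/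
open MeasureTheory Filter Topology

/-- Finite additivity on two disjoint sets. -/
lemma POVM.add_disjoint {X : Type*} [MeasurableSpace X] {H : Type*}
    [NormedAddCommGroup H] [InnerProductSpace ℂ H] [CompleteSpace H]
    (F : POVM X H) (hempty : F.toFun ∅ = 0) {A B : Set X}
    (hA : MeasurableSet A) (hB : MeasurableSet B) (hd : Disjoint A B) :
    F.toFun (A ∪ B) = F.toFun A + F.toFun B := by
  set Δ : ℕ → Set X := fun n => if n = 0 then A else if n = 1 then B else ∅ with hΔ
  have hmeas : ∀ n, MeasurableSet (Δ n) := by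
    intro n
    simp only [hΔ]
    split
    · exact hA
    · split
      · exact hB
      · exact MeasurableSet.empty
  have hpair : Pairwise (Function.onFun Disjoint Δ) := by
    intro i j hij
    unfold Function.onFun
    simp only [hΔ]
    rcases eq_or_ne i 0 with hi | hi <;> rcases eq_or_ne j 0 with hj | hj <;>
      rcases eq_or_ne i 1 with hi1 | hi1 <;> rcases eq_or_ne j 1 with hj1 | hj1 <;>
      simp_all [hd, hd.symm, disjoint_bot_right, disjoint_bot_left]
  have hunion : (⋃ n, Δ n) = A ∪ B := by
    apply Set.Subset.antisymm
    · intro y hy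
      rcases Set.mem_iUnion.1 hy with ⟨n, hn⟩
      simp only [hΔ] at hn
      split at hn
      · exact Or.inl hn
      · split at hn
        · exact Or.inr hn
        · exact absurd hn (Set.notMem_empty y)
    · intro y hy
      rcases hy with hy | hy
      · exact Set.mem_iUnion.2 ⟨0, by simpa [hΔ] using hy⟩
      · exact Set.mem_iUnion.2 ⟨1, by simpa [hΔ] using hy⟩
  refine ContinuousLinearMap.ext fun ψ => ext_inner_left ℂ fun φ => ?_
  have h1 := F.weak_additive Δ hmeas hpair φ ψ
  rw [hunion] at h1
  have h2 : Tendsto (fun n => ∑ i ∈ Finset.range n, (inner ℂ φ (F.toFun (Δ i) ψ) : ℂ))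
      atTop (𝓝 ((inner ℂ φ (F.toFun A ψ) : ℂ) + inner ℂ φ (F.toFun B ψ))) := by
    apply tendsto_atTop_of_eventually_const (i₀ := 2)
    intro n hn
    have : ∀ i ∈ Finset.range n, (inner ℂ φ (F.toFun (Δ i) ψ) : ℂ) =
        if i = 0 then inner ℂ φ (F.toFun A ψ) else if i = 1 then inner ℂ φ (F.toFun B ψ) else 0 := by
      intro i _
      simp only [hΔ]
      split
      · rfl
      · split
        · rfl
        · simp [hempty]
    rw [Finset.sum_congr rfl this]
    rw [← Finset.sum_subset (s₁ := ({0, 1} : Finset ℕ))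
      (by intro x hx; simp only [Finset.mem_insert, Finset.mem_singleton] at hx
          rcases hx with rfl | rfl <;> exact Finset.mem_range.2 (by omega))
      (fun x _ hx => by
        simp only [Finset.mem_insert, Finset.mem_singleton, not_or] at hx
        simp [hx.1, hx.2])]
    simp
  have := tendsto_nhds_unique h1 h2
  simpa [ContinuousLinearMap.add_apply, inner_add_right] using this

/-- Necessary condition for the norm-1 property for an absolutely continuous POVM:
if a POVM on a metrizable second-countable space is absolutely continuous with respect to
a Borel measure `ν` and has the norm-1 property, then it is nonzero on the singleton of
every spectrum point possessing an open neighbourhood of finite `ν`-measure. -/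
theorem norm1Property_imp_singleton_ne_zero_of_absolutelyContinuous
    {X : Type*} [TopologicalSpace X] [TopologicalSpace.MetrizableSpace X]
    [SecondCountableTopology X] [MeasurableSpace X] [BorelSpace X]
    {H : Type*} [NormedAddCommGroup H] [InnerProductSpace ℂ H] [CompleteSpace H]
    (F : POVM X H) (ν : Measure X) (c : NNReal)
    (habs : ∀ Δ : Set X, MeasurableSet Δ → (‖F.toFun Δ‖₊ : ENNReal) ≤ c * ν Δ)
    (hnorm1 : F.Norm1Property) :
    ∀ x ∈ F.spectrum, (∃ U : Set X, IsOpen U ∧ x ∈ U ∧ ν U < ⊤) →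
      F.toFun {x} ≠ 0 := by
  intro x hx hU hFx
  obtain ⟨U, hUopen, hxU, hUfin⟩ := hU
  letI : MetricSpace X := TopologicalSpace.metrizableSpaceMetric X
  have hempty : F.toFun ∅ = 0 := by
    have h := habs ∅ MeasurableSet.empty
    simp only [measure_empty, mul_zero, nonpos_iff_eq_zero, ENNReal.coe_eq_zero,
      nnnorm_eq_zero] at h
    exact h
  set Δ : ℕ → Set X := fun n => (Metric.ball x (1 / (n + 1)) ∩ U) \ {x} with hΔ
  have hmeasΔ : ∀ n, MeasurableSet (Δ n) :=
    fun n => ((Metric.isOpen_ball.inter hUopen).measurableSet).diff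
      (measurableSet_singleton x)
  have hanti : Antitone Δ := by
    intro m n hmn
    apply Set.diff_subset_diff_left
    apply Set.inter_subset_inter_left
    apply Metric.ball_subset_ball
    gcongr
  have hInter : ⋂ n, Δ n = ∅ := by
    ext y
    simp only [Set.mem_iInter, Set.mem_empty_iff_false, iff_false, not_forall]
    by_cases hy : y = x
    · exact ⟨0, by simp [hΔ, hy]⟩
    · have hd : (0 : ℝ) < dist y x := dist_pos.2 hy
      obtain ⟨n, hn⟩ := exists_nat_one_div_lt hd
      refine ⟨n, fun hmem => ?_⟩
      have : dist y x < 1 / (n + 1) := hmem.1.1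
      linarith
  have hνlim : Tendsto (fun n => ν (Δ n)) atTop (𝓝 0) := by
    have := MeasureTheory.tendsto_measure_iInter_atTop (μ := ν) (s := Δ)
      (fun n => (hmeasΔ n).nullMeasurableSet) hanti
      ⟨0, (lt_of_le_of_lt (measure_mono (fun y hy => hy.1.2)) hUfin).ne⟩
    rwa [hInter, measure_empty] at this
  have hclim : Tendsto (fun n => (c : ENNReal) * ν (Δ n)) atTop (𝓝 0) := by
    have := ENNReal.Tendsto.const_mul (a := (c : ENNReal)) hνlim
      (Or.inr ENNReal.coe_ne_top)
    simpa using this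
  have hev : ∀ᶠ n in atTop, (c : ENNReal) * ν (Δ n) < 1 :=
    hclim.eventually_lt_const (by norm_num)
  obtain ⟨n, hn⟩ := hev.exists
  have hFΔ : F.toFun (Δ n) = 0 := by
    by_contra hne
    have h1 : ‖F.toFun (Δ n)‖ = 1 := hnorm1 _ (hmeasΔ n) hne
    have h2 := habs _ (hmeasΔ n)
    rw [show ‖F.toFun (Δ n)‖₊ = 1 from NNReal.coe_injective (by simp [h1])] at h2
    exact absurd (lt_of_le_of_lt h2 hn) (by simp)
  have hball : Metric.ball x (1 / (n + 1)) ∩ U = {x} ∪ Δ n := by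
    apply Set.Subset.antisymm
    · intro y hy
      by_cases h : y = x
      · exact Or.inl h
      · exact Or.inr ⟨hy, h⟩
    · rintro y (rfl | hy)
      · exact ⟨Metric.mem_ball_self (by positivity), hxU⟩
      · exact hy.1
  have hdisj : Disjoint ({x} : Set X) (Δ n) :=
    Set.disjoint_left.2 fun y hy hy2 => hy2.2 hy
  have : F.toFun (Metric.ball x (1 / (n + 1)) ∩ U) = 0 := by
    rw [hball, F.add_disjoint hempty (measurableSet_singleton x) (hmeasΔ n) hdisj,
      hFx, hFΔ, add_zero]
  exact hx _ (Metric.isOpen_ball.inter hUopen)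
    ⟨Metric.mem_ball_self (by positivity), hxU⟩ this
end

section
/- Let F be a normalized POVM on the Borel sets of ℝ^n with values in a complex Hilbert space H, and suppose F is absolutely continuous with respect to Lebesgue measure, i.e., there is a constant c with ‖F(Δ)‖ ≤ c·λ(Δ) for all Borel Δ, where λ is Lebesgue measure on ℝ^n. Then F does not have the norm-1 property: there exists a Borel set Δ with F(Δ) ≠ 0 and ‖F(Δ)‖ < 1. -/
open MeasureTheory Filter Topology

/-- Two integers determining a common half-open interval of length `δ` coincide. -/
lemma int_eq_of_mem_Ico {δ y : ℝ} (hδ : 0 < δ) {a b : ℤ}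
    (ha1 : (a : ℝ) * δ ≤ y) (ha2 : y < ((a : ℝ) + 1) * δ)
    (hb1 : (b : ℝ) * δ ≤ y) (hb2 : y < ((b : ℝ) + 1) * δ) : a = b := by
  have h1 : (a : ℝ) < (b : ℝ) + 1 := by
    have := ha1.trans_lt hb2
    exact lt_of_mul_lt_mul_right this hδ.le
  have h2 : (b : ℝ) < (a : ℝ) + 1 := by
    have := hb1.trans_lt ha2
    exact lt_of_mul_lt_mul_right this hδ.le
  have h1' : a < b + 1 := by exact_mod_cast h1
  have h2' : b < a + 1 := by exact_mod_cast h2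
  omega

/-- No-go theorem for the norm-1 property: a normalized POVM on the Borel sets of `ℝⁿ`
(`n ≥ 1`, values in a nontrivial complex Hilbert space) which is absolutely continuous
with respect to Lebesgue measure does not have the norm-1 property: some Borel set has a
nonzero value of operator norm strictly less than one. -/
theorem normalized_absolutelyContinuous_not_norm1
    (n : ℕ) (hn : 0 < n)
    {H : Type*} [NormedAddCommGroup H] [InnerProductSpace ℂ H] [CompleteSpace H]
    [Nontrivial H]
    (F : POVM (EuclideanSpace ℝ (Fin n)) H)
    (hnormalized : F.toFun Set.univ = 1) (c : NNReal)
    (habs : ∀ Δ : Set (EuclideanSpace ℝ (Fin n)), MeasurableSet Δ →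
      (‖F.toFun Δ‖₊ : ENNReal) ≤ c * volume Δ) :
    ∃ Δ : Set (EuclideanSpace ℝ (Fin n)),
      MeasurableSet Δ ∧ F.toFun Δ ≠ 0 ∧ ‖F.toFun Δ‖ < 1 := by
  classical
  -- the identity operator is nonzero
  have h1ne : (1 : H →L[ℂ] H) ≠ 0 := by
    obtain ⟨ψ, hψ⟩ := exists_ne (0 : H)
    intro h
    have := congrArg (fun T : H →L[ℂ] H => T ψ) h
    simp only [ContinuousLinearMap.one_apply, ContinuousLinearMap.zero_apply] at this
    exact hψ this
  -- the constant `c` is nonzero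
  have hc : c ≠ 0 := by
    intro h
    have h0 := habs Set.univ MeasurableSet.univ
    rw [h, hnormalized] at h0
    simp only [ENNReal.coe_zero, zero_mul, nonpos_iff_eq_zero, ENNReal.coe_eq_zero,
      nnnorm_eq_zero] at h0
    exact h1ne h0
  -- the side length of the cubes
  set r : NNReal := min 1 (2 * c)⁻¹ with hrdef
  have hrpos : 0 < r := by
    apply lt_min one_pos
    rw [pos_iff_ne_zero]
    simp [hc]
  set δ : ℝ := (r : ℝ) with hδdef
  have hδpos : (0 : ℝ) < δ := hrpos
  -- the cubes
  set C : (Fin n → ℤ) → Set (EuclideanSpace ℝ (Fin n)) := fun v =>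
    (MeasurableEquiv.toLp 2 (Fin n → ℝ)).symm ⁻¹'
      (Set.univ.pi fun i => Set.Ico ((v i : ℝ) * δ) (((v i : ℝ) + 1) * δ)) with hCdef
  have hmemC : ∀ (v : Fin n → ℤ) (x : EuclideanSpace ℝ (Fin n)),
      x ∈ C v ↔ ∀ i, (v i : ℝ) * δ ≤ x i ∧ x i < ((v i : ℝ) + 1) * δ := by
    intro v x
    simp only [hCdef, Set.mem_preimage, Set.mem_pi, Set.mem_univ, forall_true_left,
      Set.mem_Ico]
    rfl
  have hCmeas : ∀ v, MeasurableSet (C v) := fun v =>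
    (MeasurableSet.univ_pi fun i => measurableSet_Ico).preimage
      (MeasurableEquiv.toLp 2 (Fin n → ℝ)).symm.measurable
  -- volume of each cube
  have hCvol : ∀ v, volume (C v) ≤ (r : ENNReal) := by
    intro v
    have hmp := EuclideanSpace.volume_preserving_symm_measurableEquiv_toLp (Fin n)
    rw [hCdef]
    rw [hmp.measure_preimage
      ((MeasurableSet.univ_pi fun i => measurableSet_Ico).nullMeasurableSet)]
    rw [volume_pi_pi]
    have : ∀ i : Fin n, volume (Set.Ico ((v i : ℝ) * δ) (((v i : ℝ) + 1) * δ))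
        = (r : ENNReal) := by
      intro i
      rw [Real.volume_Ico]
      have : ((v i : ℝ) + 1) * δ - (v i : ℝ) * δ = δ := by ring
      rw [this, hδdef, ENNReal.ofReal_coe_nnreal]
    rw [Finset.prod_congr rfl fun i _ => this i, Finset.prod_const, Finset.card_univ,
      Fintype.card_fin]
    calc (r : ENNReal) ^ n ≤ (r : ENNReal) ^ 1 := by
          apply pow_le_pow_of_le_one (zero_le (a := (r : ENNReal))) _ hn
          exact_mod_cast min_le_left _ _
      _ = r := pow_one _
  -- the key bound: sets of volume at most `r` have small norm
  have hkey : ∀ Δ : Set (EuclideanSpace ℝ (Fin n)), MeasurableSet Δ →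
      volume Δ ≤ (r : ENNReal) → ‖F.toFun Δ‖ < 1 := by
    intro Δ hΔ hvol
    have h1 : (‖F.toFun Δ‖₊ : ENNReal) ≤ c * r :=
      (habs Δ hΔ).trans (mul_le_mul_right hvol _)
    have h2 : (c : ENNReal) * r ≤ (c : ENNReal) * ((2 * c)⁻¹ : NNReal) := by
      apply mul_le_mul_right
      exact_mod_cast min_le_right (1 : NNReal) (2 * c)⁻¹
    have h3 : (c : ENNReal) * ((2 * c)⁻¹ : NNReal) = ((2 : NNReal)⁻¹ : NNReal) := by
      rw [← ENNReal.coe_mul, ENNReal.coe_inj]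
      rw [mul_inv, ← mul_assoc, mul_comm c, mul_assoc]
      rw [mul_inv_cancel₀ hc, mul_one]
    have h4 : ‖F.toFun Δ‖₊ ≤ (2 : NNReal)⁻¹ := by
      rw [← ENNReal.coe_le_coe]
      exact h1.trans (h2.trans_eq h3)
    have h5 : ‖F.toFun Δ‖ ≤ ((2 : NNReal)⁻¹ : ℝ) := h4
    calc ‖F.toFun Δ‖ ≤ ((2 : NNReal)⁻¹ : ℝ) := h5
      _ < 1 := by norm_num
  -- enumerate the cubes
  haveI : Nonempty (Fin n) := ⟨⟨0, hn⟩⟩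
  letI : Denumerable (Fin n → ℤ) := Denumerable.ofEncodableOfInfinite _
  set e : ℕ ≃ (Fin n → ℤ) := (Denumerable.eqv (Fin n → ℤ)).symm with hedef
  set Δ : ℕ → Set (EuclideanSpace ℝ (Fin n)) := fun k => C (e k) with hΔdef
  have hΔmeas : ∀ k, MeasurableSet (Δ k) := fun k => hCmeas _
  -- the cubes cover everything
  have hcover : (⋃ k, Δ k) = Set.univ := by
    ext x
    simp only [Set.mem_iUnion, Set.mem_univ, iff_true]
    refine ⟨e.symm fun i => ⌊x i / δ⌋, ?_⟩
    rw [hΔdef]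
    simp only [Equiv.apply_symm_apply]
    rw [hmemC]
    intro i
    constructor
    · have := Int.floor_le (x i / δ)
      calc (⌊x i / δ⌋ : ℝ) * δ ≤ (x i / δ) * δ := by
            exact mul_le_mul_of_nonneg_right this hδpos.le
        _ = x i := div_mul_cancel₀ _ hδpos.ne'
    · have := Int.lt_floor_add_one (x i / δ)
      calc x i = (x i / δ) * δ := (div_mul_cancel₀ _ hδpos.ne').symm
        _ < ((⌊x i / δ⌋ : ℝ) + 1) * δ := by
            exact mul_lt_mul_of_pos_right this hδpos
  -- the cubes are pairwise disjoint
  have hdisj : Pairwise (Function.onFun Disjoint Δ) := by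
    intro k l hkl
    rw [Function.onFun, Set.disjoint_left]
    intro x hxk hxl
    apply hkl
    apply e.injective
    funext i
    rw [hΔdef] at hxk hxl
    rw [hmemC] at hxk hxl
    obtain ⟨ha1, ha2⟩ := hxk i
    obtain ⟨hb1, hb2⟩ := hxl i
    exact int_eq_of_mem_Ico hδpos ha1 ha2 hb1 hb2
  -- some cube has nonzero operator value
  have hex : ∃ k, F.toFun (Δ k) ≠ 0 := by
    by_contra h
    push_neg at h
    obtain ⟨ψ, hψ⟩ := exists_ne (0 : H)
    have htend := F.weak_additive Δ hΔmeas hdisj ψ ψ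
    have hzero : ∀ i : ℕ, (inner ℂ ψ (F.toFun (Δ i) ψ) : ℂ) = 0 := by
      intro i; rw [h i]; simp
    have : Tendsto (fun n : ℕ => (0 : ℂ)) atTop
        (𝓝 (inner ℂ ψ (F.toFun (⋃ k, Δ k) ψ) : ℂ)) := by
      refine htend.congr fun m => ?_
      rw [Finset.sum_congr rfl fun i _ => hzero i, Finset.sum_const, smul_zero]
    have h0 : (inner ℂ ψ (F.toFun (⋃ k, Δ k) ψ) : ℂ) = 0 :=
      tendsto_nhds_unique this tendsto_const_nhds
    rw [hcover, hnormalized] at h0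
    simp only [ContinuousLinearMap.one_apply] at h0
    exact hψ (inner_self_eq_zero.mp h0)
  obtain ⟨k, hk⟩ := hex
  exact ⟨Δ k, hΔmeas k, hk, hkey (Δ k) (hΔmeas k) (hCvol (e k))⟩
end

section
/- Let μ be the Borel measure on ℝ³ × ℝ³ with density (a, p) ↦ ‖p‖⁻¹ with respect to Lebesgue measure (the invariant measure on the phase space of a massless relativistic particle). Let F be a normalized POVM on the Borel sets of ℝ³ × ℝ³ with values in a complex Hilbert space H such that ‖F(Δ)‖ ≤ c·μ(Δ) for all Borel Δ and some constant c. Then F does not have the norm-1 property: there exists a Borel set Δ with F(Δ) ≠ 0 and ‖F(Δ)‖ < 1. -/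
open MeasureTheory Filter Topology

/-- The invariant measure `dμ = ‖p‖⁻¹ da dp` on the phase space `ℝ³ × ℝ³` of a massless
relativistic particle: Lebesgue measure with density `(a, p) ↦ ‖p‖⁻¹`. -/
noncomputable def masslessPhaseSpaceMeasure :
    Measure (EuclideanSpace ℝ (Fin 3) × EuclideanSpace ℝ (Fin 3)) :=
  volume.withDensity fun ap => (ENNReal.ofReal ‖ap.2‖)⁻¹

private noncomputable instance massless_aux_haar :
    (volume : Measure (EuclideanSpace ℝ (Fin 3) × EuclideanSpace ℝ (Fin 3))).IsAddHaarMeasure :=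
  (Measure.volume_eq_prod (EuclideanSpace ℝ (Fin 3)) (EuclideanSpace ℝ (Fin 3))) ▸
    Measure.prod.instIsAddHaarMeasure _ _

/-- Auxiliary: for every `η ≠ 0` there is a countable cover of phase space by measurable
sets each of `masslessPhaseSpaceMeasure` at most `η`. -/
private lemma massless_aux_cover (η : ENNReal) (hη : η ≠ 0) :
    ∃ C : ℕ → Set (EuclideanSpace ℝ (Fin 3) × EuclideanSpace ℝ (Fin 3)),
      (∀ j, MeasurableSet (C j)) ∧ (⋃ j, C j) = Set.univ ∧
      (∀ j, masslessPhaseSpaceMeasure (C j) ≤ η) := by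
  classical
  set E := EuclideanSpace ℝ (Fin 3) × EuclideanSpace ℝ (Fin 3)
  set V : ENNReal := volume (Metric.ball (0 : E) 1) with hVdef
  have hV : V ≠ ⊤ := measure_ball_lt_top.ne
  have hd : ∀ k : ℕ, ∃ δ : NNReal, 0 < δ ∧
      (δ : ENNReal) * (ENNReal.ofReal ((k : ℝ) + 1) * V) < η := by
    intro k
    exact ENNReal.exists_nnreal_pos_mul_lt
      (ENNReal.mul_ne_top ENNReal.ofReal_ne_top hV) hη
  choose δ hδpos hδlt using hd
  set r : ℕ → ℝ := fun k => min 1 (δ k) with hrdef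
  have hrpos : ∀ k, 0 < r k := fun k => lt_min one_pos (hδpos k)
  have hrball : ∀ k (x : E), volume (Metric.ball x (r k)) ≤ (δ k : ENNReal) * V := by
    intro k x
    rw [Measure.addHaar_ball_of_pos _ x (hrpos k)]
    refine mul_le_mul_left ?_ V
    have h1 : r k ^ Module.finrank ℝ E ≤ r k ^ 1 :=
      pow_le_pow_of_le_one (le_of_lt (hrpos k)) (min_le_left _ _)
        (by simp [E, Module.finrank_prod])
    have h2 : r k ^ Module.finrank ℝ E ≤ (δ k : ℝ) := by
      calc r k ^ Module.finrank ℝ E ≤ r k ^ 1 := h1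
        _ = r k := pow_one _
        _ ≤ (δ k : ℝ) := min_le_right _ _
    calc ENNReal.ofReal (r k ^ Module.finrank ℝ E) ≤ ENNReal.ofReal (δ k : ℝ) :=
          ENNReal.ofReal_le_ofReal h2
      _ = (δ k : ENNReal) := ENNReal.ofReal_coe_nnreal
  have : Nonempty E := ⟨0⟩
  set u : ℕ → E := TopologicalSpace.denseSeq E with hudef
  have hu : DenseRange u := TopologicalSpace.denseRange_denseSeq E
  refine ⟨fun j => Nat.casesOn j {x : E | x.2 = 0}
    (fun m => Metric.ball (u m.unpair.2) (r m.unpair.1) ∩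
      {x : E | ((m.unpair.1 : ℝ) + 1)⁻¹ ≤ ‖x.2‖}), ?_, ?_, ?_⟩
  · rintro (_ | m)
    · exact (measurable_snd (measurableSet_singleton (0 : EuclideanSpace ℝ (Fin 3))))
    · exact measurableSet_ball.inter
        (measurableSet_le measurable_const (measurable_norm.comp measurable_snd))
  · rw [Set.eq_univ_iff_forall]
    intro x
    rcases eq_or_ne x.2 0 with h0 | h0
    · exact Set.mem_iUnion.mpr ⟨0, h0⟩
    · have hn : (0 : ℝ) < ‖x.2‖ := norm_pos_iff.mpr h0
      obtain ⟨k, hk⟩ := exists_nat_one_div_lt hn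
      obtain ⟨n, hnx⟩ := Metric.denseRange_iff.mp hu x (r k) (hrpos k)
      refine Set.mem_iUnion.mpr ⟨Nat.pair k n + 1, ?_⟩
      simp only [Nat.unpair_pair]
      refine ⟨Metric.mem_ball.mpr ?_, ?_⟩
      · exact hnx
      · have : ((k : ℝ) + 1)⁻¹ ≤ ‖x.2‖ := by
          rw [← one_div]; exact hk.le
        exact this
  · rintro (_ | m)
    · have hv0 : volume {x : E | x.2 = 0} = 0 := by
        have hset : {x : E | x.2 = 0} =
            (Set.univ : Set (EuclideanSpace ℝ (Fin 3))) ×ˢ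
              ({0} : Set (EuclideanSpace ℝ (Fin 3))) := by
          ext y
          exact ⟨fun h => ⟨Set.mem_univ _, h⟩, fun h => h.2⟩
        rw [hset, Measure.volume_eq_prod, Measure.prod_prod]
        simp
      have : masslessPhaseSpaceMeasure {x : E | x.2 = 0} = 0 :=
        (withDensity_absolutelyContinuous volume _) hv0
      exact le_trans (le_of_eq this) zero_le
    · set k := m.unpair.1
      set n := m.unpair.2
      set S : Set E := Metric.ball (u n) (r k) ∩ {x : E | ((k : ℝ) + 1)⁻¹ ≤ ‖x.2‖} with hSdef
      have hS : MeasurableSet S := measurableSet_ball.inter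
        (measurableSet_le measurable_const (measurable_norm.comp measurable_snd))
      have hkpos : (0 : ℝ) < (k : ℝ) + 1 := by positivity
      have hbound : ∀ x ∈ S, (ENNReal.ofReal ‖x.2‖)⁻¹ ≤ ENNReal.ofReal ((k : ℝ) + 1) := by
        intro x hx
        have h1 : ENNReal.ofReal (((k : ℝ) + 1)⁻¹) ≤ ENNReal.ofReal ‖x.2‖ :=
          ENNReal.ofReal_le_ofReal hx.2
        have h2 : (ENNReal.ofReal ‖x.2‖)⁻¹ ≤ (ENNReal.ofReal (((k : ℝ) + 1)⁻¹))⁻¹ :=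
          ENNReal.inv_le_inv.mpr h1
        rwa [ENNReal.ofReal_inv_of_pos hkpos, inv_inv] at h2
      calc masslessPhaseSpaceMeasure S
          = ∫⁻ x in S, (ENNReal.ofReal ‖x.2‖)⁻¹ ∂volume := withDensity_apply _ hS
        _ ≤ ∫⁻ _x in S, ENNReal.ofReal ((k : ℝ) + 1) ∂volume :=
            setLIntegral_mono measurable_const hbound
        _ = ENNReal.ofReal ((k : ℝ) + 1) * volume S := setLIntegral_const _ _
        _ ≤ ENNReal.ofReal ((k : ℝ) + 1) * ((δ k : ENNReal) * V) :=
            mul_le_mul_right ((measure_mono Set.inter_subset_left).trans (hrball k _)) _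
        _ = (δ k : ENNReal) * (ENNReal.ofReal ((k : ℝ) + 1) * V) := by ring
        _ ≤ η := (hδlt k).le

/-- No-go theorem for the norm-1 property on the phase space of a massless relativistic
particle: a normalized POVM on the Borel sets of `ℝ³ × ℝ³` (values in a nontrivial
complex Hilbert space) which is absolutely continuous with respect to the invariant
measure `μ` (density `‖p‖⁻¹`) does not have the norm-1 property. -/
theorem massless_normalized_absolutelyContinuous_not_norm1
    {H : Type*} [NormedAddCommGroup H] [InnerProductSpace ℂ H] [CompleteSpace H]
    [Nontrivial H]
    (F : POVM (EuclideanSpace ℝ (Fin 3) × EuclideanSpace ℝ (Fin 3)) H)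
    (hnormalized : F.toFun Set.univ = 1) (c : NNReal)
    (habs : ∀ Δ : Set (EuclideanSpace ℝ (Fin 3) × EuclideanSpace ℝ (Fin 3)),
      MeasurableSet Δ → (‖F.toFun Δ‖₊ : ENNReal) ≤ c * masslessPhaseSpaceMeasure Δ) :
    ∃ Δ : Set (EuclideanSpace ℝ (Fin 3) × EuclideanSpace ℝ (Fin 3)),
      MeasurableSet Δ ∧ F.toFun Δ ≠ 0 ∧ ‖F.toFun Δ‖ < 1 := by
  classical
  set η : ENNReal := (2 * ((c : ENNReal) + 1))⁻¹ with hηdef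
  have hη0 : η ≠ 0 := by
    rw [hηdef]
    exact ENNReal.inv_ne_zero.mpr (by finiteness)
  obtain ⟨C, hCm, hCu, hCb⟩ := massless_aux_cover η hη0
  set D := disjointed C with hDdef
  have hDm : ∀ n, MeasurableSet (D n) := MeasurableSet.disjointed hCm
  have hDd : Pairwise (Function.onFun Disjoint D) := disjoint_disjointed C
  have hDu : (⋃ n, D n) = Set.univ := by rw [hDdef, iUnion_disjointed, hCu]
  obtain ⟨x, hx⟩ := exists_ne (0 : H)
  have key : ∃ i, F.toFun (D i) ≠ 0 := by
    by_contra h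
    push_neg at h
    have h1 := F.weak_additive D hDm hDd x x
    rw [hDu, hnormalized] at h1
    simp only [h, ContinuousLinearMap.zero_apply, inner_zero_right,
      Finset.sum_const_zero] at h1
    have h2 : (0 : ℂ) = inner ℂ x ((1 : H →L[ℂ] H) x) :=
      tendsto_nhds_unique tendsto_const_nhds h1
    rw [ContinuousLinearMap.one_apply] at h2
    exact hx (inner_self_eq_zero.mp h2.symm)
  obtain ⟨i, hi⟩ := key
  refine ⟨D i, hDm i, hi, ?_⟩
  have hc1 : ((c : ENNReal) + 1) ≠ 0 := by simp
  have hc2 : ((c : ENNReal) + 1) ≠ ⊤ := by finiteness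
  have hhalf : ((c : ENNReal) + 1) * η = 2⁻¹ := by
    rw [hηdef, ENNReal.mul_inv (Or.inl two_ne_zero) (Or.inl ENNReal.ofNat_ne_top),
      mul_comm (2 : ENNReal)⁻¹ _, ← mul_assoc, ENNReal.mul_inv_cancel hc1 hc2, one_mul]
  have hb : (‖F.toFun (D i)‖₊ : ENNReal) ≤ 2⁻¹ := by
    calc (‖F.toFun (D i)‖₊ : ENNReal)
        ≤ c * masslessPhaseSpaceMeasure (D i) := habs _ (hDm i)
      _ ≤ (c : ENNReal) * masslessPhaseSpaceMeasure (C i) :=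
          mul_le_mul_right (measure_mono (disjointed_subset C i)) _
      _ ≤ (c : ENNReal) * η := mul_le_mul_right (hCb i) _
      _ ≤ ((c : ENNReal) + 1) * η := mul_le_mul_left le_self_add _
      _ = 2⁻¹ := hhalf
  have hb' : ‖F.toFun (D i)‖ ≤ (2 : ℝ)⁻¹ := by
    have h3 := ENNReal.toReal_mono (by norm_num) hb
    simpa using h3
  linarith [hb']
end

section
/- Let e : ℝ³ → ℝ be a bounded probability density (e ≥ 0 almost everywhere, ∫_{ℝ³} e = 1, and e ≤ C almost everywhere for some constant C), and for a Borel set Δ ⊆ ℝ³ let F^Q(Δ) be the operator on L²(ℝ³) of multiplication by χ_Δ * e. Then F^Q does not have the norm-1 property: there exists a Borel set Δ ⊆ ℝ³ such that F^Q(Δ) ≠ 0 but ‖F^Q(Δ)‖ < 1. -/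
open MeasureTheory ENNReal

local notation "E3" => EuclideanSpace ℝ (Fin 3)

set_option maxHeartbeats 1000000 in
/-- Auxiliary: the multiplication operator on `L²` by a measurable function bounded by `1/2`. -/
lemma exists_mul_clm {α : Type*} [MeasurableSpace α] (μ : Measure α)
    (g : α → ℂ) (hg : Measurable g) (hb : ∀ x, ‖g x‖ ≤ 1 / 2) :
    ∃ T : Lp ℂ 2 μ →L[ℂ] Lp ℂ 2 μ,
      (∀ ψ : Lp ℂ 2 μ, (T ψ : α → ℂ) =ᵐ[μ] fun x => g x * ψ x) ∧ ‖T‖ ≤ 1 / 2 := by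
  have hmem : ∀ ψ : Lp ℂ 2 μ, MemLp (fun x => g x * ψ x) 2 μ := by
    intro ψ
    refine MemLp.of_le (Lp.memLp ψ)
      (hg.aestronglyMeasurable.mul (Lp.aestronglyMeasurable ψ)) ?_
    refine Filter.Eventually.of_forall fun x => ?_
    rw [norm_mul]
    calc ‖g x‖ * ‖ψ x‖ ≤ (1 / 2) * ‖ψ x‖ :=
        mul_le_mul_of_nonneg_right (hb x) (norm_nonneg _)
      _ ≤ ‖ψ x‖ := by nlinarith [norm_nonneg ((ψ : α → ℂ) x)]
  set Lmap : Lp ℂ 2 μ →ₗ[ℂ] Lp ℂ 2 μ :=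
    { toFun := fun ψ => (hmem ψ).toLp _
      map_add' := by
        intro ψ φ
        refine Lp.ext ?_
        filter_upwards [(hmem (ψ + φ)).coeFn_toLp, (hmem ψ).coeFn_toLp, (hmem φ).coeFn_toLp,
          Lp.coeFn_add ψ φ, Lp.coeFn_add ((hmem ψ).toLp _) ((hmem φ).toLp _)] with x h1 h2 h3 h4 h5
        rw [h1, h5, Pi.add_apply, h2, h3, h4, Pi.add_apply, mul_add]
      map_smul' := by
        intro a ψ
        refine Lp.ext ?_
        filter_upwards [(hmem (a • ψ)).coeFn_toLp, (hmem ψ).coeFn_toLp,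
          Lp.coeFn_smul a ψ, Lp.coeFn_smul a ((hmem ψ).toLp _)] with x h1 h2 h3 h4
        rw [h1, RingHom.id_apply, h4, Pi.smul_apply, h2, h3, Pi.smul_apply, smul_eq_mul,
          smul_eq_mul, mul_left_comm]
    } with hLdef
  have hhalf : ((‖(1 / 2 : ℂ)‖₊ : ℝ≥0∞)).toReal = 1 / 2 := by
    rw [ENNReal.coe_toReal, coe_nnnorm]
    norm_num
  have hLbound : ∀ ψ : Lp ℂ 2 μ, ‖Lmap ψ‖ ≤ (1 / 2) * ‖ψ‖ := by
    intro ψ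
    have h1 : ‖Lmap ψ‖ = (eLpNorm (fun x => g x * ψ x) 2 μ).toReal := Lp.norm_toLp _ (hmem ψ)
    have h2 : eLpNorm (fun x => g x * ψ x) 2 μ
        ≤ eLpNorm ((1 / 2 : ℂ) • (ψ : α → ℂ)) 2 μ := by
      refine eLpNorm_mono_ae (Filter.Eventually.of_forall fun x => ?_)
      simp only [Pi.smul_apply, smul_eq_mul, norm_mul]
      refine mul_le_mul_of_nonneg_right ((hb x).trans (le_of_eq ?_)) (norm_nonneg _)
      norm_num
    have h3 : eLpNorm ((1 / 2 : ℂ) • (ψ : α → ℂ)) 2 μ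
        = ‖(1 / 2 : ℂ)‖₊ * eLpNorm (ψ : α → ℂ) 2 μ := eLpNorm_const_smul _ _ _ _
    have h4 : ((‖(1 / 2 : ℂ)‖₊ : ℝ≥0∞) * eLpNorm (ψ : α → ℂ) 2 μ).toReal = (1 / 2) * ‖ψ‖ := by
      rw [ENNReal.toReal_mul, Lp.norm_def, hhalf]
    rw [h1, ← h4]
    refine ENNReal.toReal_mono ?_ (h2.trans (le_of_eq h3))
    exact ENNReal.mul_ne_top ENNReal.coe_ne_top (Lp.eLpNorm_ne_top ψ)
  refine ⟨Lmap.mkContinuous (1 / 2) hLbound, fun ψ => (hmem ψ).coeFn_toLp, ?_⟩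
  exact Lmap.mkContinuous_norm_le (by norm_num) hLbound

set_option maxHeartbeats 2000000 in
/-- The unsharp position observable does not have the norm-1 property: for a bounded
probability density `e` on `ℝ³` (with `e ≤ C` a.e.) there is a Borel set `Δ ⊆ ℝ³` such
that the operator `F^Q(Δ)` on `L²(ℝ³)` of multiplication by the convolution `χ_Δ * e`,
`(χ_Δ * e)(x) = ∫_Δ e (x - q) dq`, is nonzero but has operator norm strictly
less than one. -/
theorem unsharpPosition_not_norm1
    (e : EuclideanSpace ℝ (Fin 3) → ℝ) (C : NNReal)
    (he0 : ∀ᵐ x ∂(volume : Measure (EuclideanSpace ℝ (Fin 3))), 0 ≤ e x)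
    (he1 : (∫ x : EuclideanSpace ℝ (Fin 3), e x) = 1)
    (heC : ∀ᵐ x ∂(volume : Measure (EuclideanSpace ℝ (Fin 3))), e x ≤ C) :
    ∃ Δ : Set (EuclideanSpace ℝ (Fin 3)), MeasurableSet Δ ∧
      ∃ T : Lp ℂ 2 (volume : Measure (EuclideanSpace ℝ (Fin 3))) →L[ℂ]
            Lp ℂ 2 (volume : Measure (EuclideanSpace ℝ (Fin 3))),
        (∀ ψ : Lp ℂ 2 (volume : Measure (EuclideanSpace ℝ (Fin 3))),
          (T ψ : EuclideanSpace ℝ (Fin 3) → ℂ)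
            =ᵐ[volume] fun x => (((∫ q in Δ, e (x - q)) : ℝ) : ℂ) * ψ x) ∧
        T ≠ 0 ∧ ‖T‖ < 1 := by
  -- `e` is integrable
  have he_int : Integrable e (volume : Measure E3) := by
    by_contra h
    rw [integral_undef h] at he1
    norm_num at he1
  -- measurable everywhere-nonnegative representative `e''`
  obtain ⟨e', he'meas, he'ae⟩ := he_int.aestronglyMeasurable
  set e'' : E3 → ℝ := fun x => max (e' x) 0 with he''def
  have he''meas : Measurable e'' := he'meas.measurable.max measurable_const
  have he''ae : e =ᵐ[volume] e'' := by
    filter_upwards [he'ae, he0] with x h1 h2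
    simp [he''def, ← h1, max_eq_left h2]
  have he''nonneg : ∀ x, 0 ≤ e'' x := fun x => le_max_right _ _
  have he''int : Integrable e'' (volume : Measure E3) := he_int.congr he''ae
  have he''1 : (∫ x, e'' x ∂(volume : Measure E3)) = 1 := by
    rw [← integral_congr_ae he''ae]; exact he1
  have he''C : ∀ᵐ x ∂(volume : Measure E3), e'' x ≤ C := by
    filter_upwards [he''ae, heC] with x h1 h2
    rw [← h1]; exact h2
  -- choice of the radius
  set v : ℝ := (volume (Metric.ball (0:E3) 1)).toReal with hvdef
  have hv0 : 0 ≤ v := ENNReal.toReal_nonneg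
  have hC0 : (0:ℝ) ≤ C := C.2
  set r : ℝ := min 1 (1 / (2 * ((C:ℝ) * v + 1))) with hrdef
  have hr0 : 0 < r := lt_min one_pos (by positivity)
  have hr1 : r ≤ 1 := min_le_left _ _
  have hrle : r ≤ 1 / (2 * ((C:ℝ) * v + 1)) := min_le_right _ _
  set Δ : Set E3 := Metric.ball 0 r with hΔdef
  have hΔm : MeasurableSet Δ := measurableSet_ball
  have hΔpos : 0 < volume Δ := Metric.measure_ball_pos _ _ hr0
  have hΔfin : volume Δ < ⊤ := measure_ball_lt_top
  have hΔval : (volume Δ).toReal = r ^ 3 * v := by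
    rw [hΔdef, Measure.addHaar_ball volume _ hr0.le, finrank_euclideanSpace_fin,
      ENNReal.toReal_mul, ENNReal.toReal_ofReal (by positivity)]
  have hkey : (volume Δ).toReal * (C:ℝ) ≤ 1 / 2 := by
    rw [hΔval]
    have h3 : r ^ 3 ≤ r := by
      calc r ^ 3 ≤ r ^ 1 := pow_le_pow_of_le_one hr0.le hr1 (by norm_num)
      _ = r := pow_one r
    have h4 : r * (2 * ((C:ℝ) * v + 1)) ≤ 1 := by
      rw [← le_div_iff₀ (by positivity)]; exact hrle
    nlinarith [mul_nonneg hv0 hC0, mul_nonneg (mul_nonneg hr0.le hv0) hC0,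
      mul_le_mul_of_nonneg_right h3 (mul_nonneg hv0 hC0)]
  -- measure preserving maps
  have hmpL : ∀ x : E3, MeasurePreserving (fun q : E3 => x - q) volume volume :=
    fun x => Measure.measurePreserving_sub_left volume x
  -- the smeared function
  set f' : E3 → ℝ := fun x => ∫ q in Δ, e'' (x - q) with hf'def
  have hcomp_ae : ∀ x : E3, (fun q => e (x - q)) =ᵐ[(volume : Measure E3)]
      (fun q => e'' (x - q)) := by
    intro x
    have := (hmpL x).quasiMeasurePreserving.ae_eq_comp he''ae
    exact this
  have hfeq : ∀ x : E3, (∫ q in Δ, e (x - q)) = f' x := by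
    intro x
    exact integral_congr_ae (ae_restrict_of_ae (hcomp_ae x))
  have hint : ∀ x : E3, IntegrableOn (fun q => e'' (x - q)) Δ (volume : Measure E3) := by
    intro x
    have : Integrable ((fun q => e'' q) ∘ (fun q : E3 => x - q)) volume :=
      ((hmpL x).integrable_comp he''int.aestronglyMeasurable).2 he''int
    exact this.integrableOn
  have hf'nonneg : ∀ x, 0 ≤ f' x := fun x => integral_nonneg fun q => he''nonneg _
  have hCb_ae : ∀ x : E3, ∀ᵐ q ∂((volume : Measure E3).restrict Δ), e'' (x - q) ≤ C := by
    intro x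
    refine ae_restrict_of_ae ?_
    have hmin : (fun y => min (e'' y) (C:ℝ)) =ᵐ[(volume : Measure E3)] e'' := by
      filter_upwards [he''C] with y hy; exact min_eq_left hy
    have := (hmpL x).quasiMeasurePreserving.ae_eq_comp hmin
    filter_upwards [this] with q hq
    have : min (e'' (x - q)) (C:ℝ) = e'' (x - q) := hq
    rw [← this]; exact min_le_right _ _
  have hf'le : ∀ x, f' x ≤ 1 / 2 := by
    intro x
    have h1 : f' x ≤ ∫ _ in Δ, (C:ℝ) ∂(volume : Measure E3) := by
      refine integral_mono_ae (hint x) ?_ (hCb_ae x)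
      exact integrableOn_const hΔfin.ne
    have h2 : (∫ _ in Δ, (C:ℝ) ∂(volume : Measure E3)) = (volume Δ).toReal * (C:ℝ) := by
      rw [setIntegral_const, smul_eq_mul]; rfl
    calc f' x ≤ (volume Δ).toReal * (C:ℝ) := h2 ▸ h1
    _ ≤ 1 / 2 := hkey
  -- measurability of f'
  have hf'meas : StronglyMeasurable f' := by
    have huncurry : StronglyMeasurable (fun p : E3 × E3 => e'' (p.1 - p.2)) :=
      (he''meas.comp (measurable_fst.sub measurable_snd)).stronglyMeasurable
    exact huncurry.integral_prod_right'
  -- total mass of f'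
  have hof : (∫⁻ x, ENNReal.ofReal (f' x) ∂(volume : Measure E3)) = volume Δ := by
    have h1 : ∀ x : E3, ENNReal.ofReal (f' x)
        = ∫⁻ q in Δ, ENNReal.ofReal (e'' (x - q)) ∂(volume : Measure E3) := fun x =>
      ofReal_integral_eq_lintegral_ofReal (hint x)
        (Filter.Eventually.of_forall fun q => he''nonneg _)
    simp_rw [h1]
    rw [lintegral_lintegral_swap]
    · have h2 : ∀ q : E3, (∫⁻ x, ENNReal.ofReal (e'' (x - q)) ∂(volume : Measure E3)) = 1 := by
        intro q
        rw [lintegral_sub_right_eq_self (fun y => ENNReal.ofReal (e'' y)) q,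
          ← ofReal_integral_eq_lintegral_ofReal he''int
            (Filter.Eventually.of_forall he''nonneg), he''1, ENNReal.ofReal_one]
      simp_rw [h2]
      simp
    · exact (ENNReal.measurable_ofReal.comp
        (he''meas.comp (measurable_fst.sub measurable_snd))).aemeasurable
  -- a set where f' is bounded below
  have hS : ∃ n : ℕ, 0 < volume {x : E3 | 1 / (n + 1 : ℝ) ≤ f' x} := by
    by_contra h
    push_neg at h
    have hz : ∀ n : ℕ, ∀ᵐ x ∂(volume : Measure E3), ¬ (1 / (n + 1 : ℝ) ≤ f' x) := by
      intro n
      have := le_antisymm (h n) zero_le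
      exact ae_iff.2 (by simpa using this)
    have hle : ∀ᵐ x ∂(volume : Measure E3), f' x ≤ 0 := by
      rw [← ae_all_iff] at hz
      filter_upwards [hz] with x hx
      by_contra hpos
      push_neg at hpos
      obtain ⟨n, hn⟩ := exists_nat_one_div_lt hpos
      exact hx n hn.le
    have : (∫⁻ x, ENNReal.ofReal (f' x) ∂(volume : Measure E3)) = 0 := by
      rw [← lintegral_zero]
      refine lintegral_congr_ae ?_
      filter_upwards [hle] with x hx
      simp [ENNReal.ofReal_eq_zero.2 hx]
    rw [hof] at this
    exact hΔpos.ne' this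
  obtain ⟨n, hSpos⟩ := hS
  set c : ℝ := 1 / (n + 1 : ℝ) with hcdef
  have hc0 : 0 < c := by positivity
  set S : Set E3 := {x : E3 | c ≤ f' x} with hSdef
  have hSmeas : MeasurableSet S := measurableSet_le measurable_const hf'meas.measurable
  have hSfin : volume S < ⊤ := by
    have hm := mul_meas_ge_le_lintegral₀
      ((hf'meas.measurable.ennreal_ofReal).aemeasurable
        (μ := (volume : Measure E3))) (ENNReal.ofReal c)
    rw [hof] at hm
    have hsub : S ⊆ {x : E3 | ENNReal.ofReal c ≤ ENNReal.ofReal (f' x)} :=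
      fun x hx => ENNReal.ofReal_le_ofReal hx
    by_contra htop
    rw [not_lt, top_le_iff] at htop
    have : volume {x : E3 | ENNReal.ofReal c ≤ ENNReal.ofReal (f' x)} = ⊤ :=
      top_le_iff.1 (htop ▸ measure_mono hsub)
    rw [this, ENNReal.mul_top (by simp [ENNReal.ofReal_eq_zero, hc0.not_ge])] at hm
    exact hΔfin.ne (top_le_iff.1 hm)
  -- the multiplication operator
  set g : E3 → ℂ := fun x => ((f' x : ℝ) : ℂ) with hgdef
  have hgmeas : Measurable g := Complex.measurable_ofReal.comp hf'meas.measurable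
  have hgbound : ∀ x, ‖g x‖ ≤ 1 / 2 := by
    intro x
    rw [hgdef]
    simp only [Complex.norm_real, Real.norm_eq_abs, abs_of_nonneg (hf'nonneg x)]
    exact hf'le x
  obtain ⟨T, hTapply, hTnorm⟩ := exists_mul_clm (volume : Measure E3) g hgmeas hgbound
  refine ⟨Δ, hΔm, T, ?_, ?_, ?_⟩
  · intro ψ
    have : (fun x => (((∫ q in Δ, e (x - q)) : ℝ) : ℂ) * ψ x) = fun x => g x * ψ x := by
      funext x
      rw [hfeq x]
    rw [this]
    exact hTapply ψ
  · -- T ≠ 0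
    intro hT0
    set ψS : Lp ℂ 2 (volume : Measure E3) :=
      indicatorConstLp 2 hSmeas hSfin.ne (1 : ℂ) with hψSdef
    have h1 : (T ψS : E3 → ℂ) =ᵐ[(volume : Measure E3)] 0 := by
      rw [hT0]
      simpa using Lp.coeFn_zero ℂ 2 (volume : Measure E3)
    have h2 : (fun x => g x * ψS x) =ᵐ[(volume : Measure E3)] 0 :=
      (hTapply ψS).symm.trans h1
    have h3 : ∀ᵐ x ∂(volume : Measure E3),
        g x * S.indicator (fun _ => (1:ℂ)) x = 0 := by
      filter_upwards [h2, indicatorConstLp_coeFn (p := 2) (μ := (volume : Measure E3))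
        (hs := hSmeas) (hμs := hSfin.ne) (c := (1:ℂ))] with x hx hx2
      rw [← hx2]
      exact hx
    have h4 : volume S = 0 := by
      have hsub : S ⊆ {x : E3 | ¬ (g x * S.indicator (fun _ => (1:ℂ)) x = 0)} := by
        intro x hx
        simp only [Set.mem_setOf_eq, Set.indicator_of_mem hx, mul_one]
        rw [hgdef]
        simp only [ne_eq, Complex.ofReal_eq_zero]
        exact fun h0 => (hc0.trans_le (hx : c ≤ f' x)).ne' (by simpa using h0)
      refine le_antisymm ?_ zero_le
      calc volume S ≤ volume {x : E3 | ¬ (g x * S.indicator (fun _ => (1:ℂ)) x = 0)} :=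
        measure_mono hsub
      _ = 0 := ae_iff.1 h3
    exact hSpos.ne' h4
  · -- norm < 1
    calc ‖T‖ ≤ 1 / 2 := hTnorm
      _ < 1 := by norm_num
end
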